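/- Let (R₁, Ad_{Γ₁}) and (R₂, Ad_{Γ₂}) be graded von Neumann algebras on Hilbert spaces H₁, H₂, and let R₁ ⊗̂ R₂ denote their graded tensor product, graded by Ad_{I⊗Γ₂}. Then the even part of R₁ ⊗̂ R₂ with respect to this grading equals the von Neumann tensor product R₁ ⊗̄ (R₂)^(0). Moreover, if (R₂, Ad_{Γ₂}) is balanced, then (R₁ ⊗̂ R₂, Ad_{I⊗Γ₂}) is balanced. -/

import Mathlib

noncomputable section

variable {H : Type*} [NormedAddCommGroup H] [InnerProductSpace ℂ H] [CompleteSpace H]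

/-- A self-adjoint unitary operator. -/
def IsSAU (Γ : H →L[ℂ] H) : Prop := star Γ = Γ ∧ Γ * Γ = 1

/-- The even part of a graded set of operators. -/
def evenPart (R : Set (H →L[ℂ] H)) (Γ : H →L[ℂ] H) : Set (H →L[ℂ] H) :=
  {x | x ∈ R ∧ Γ * x * Γ = x}

/-- The odd part of a graded set of operators. -/
def oddPart (R : Set (H →L[ℂ] H)) (Γ : H →L[ℂ] H) : Set (H →L[ℂ] H) :=
  {x | x ∈ R ∧ Γ * x * Γ = -x}

/-- The center of a set of operators. -/
def centerSet (R : Set (H →L[ℂ] H)) : Set (H →L[ℂ] H) :=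
  {x | x ∈ R ∧ ∀ y ∈ R, x * y = y * x}

/-- An (orthogonal) projection operator. -/
def IsProjOp (e : H →L[ℂ] H) : Prop := e * e = e ∧ star e = e

/-- `e` is a subprojection of `f`. -/
def SubProj (e f : H →L[ℂ] H) : Prop := e * f = e ∧ f * e = e

/-- Murray–von Neumann equivalence of projections relative to `M`. -/
def MvNEquiv (M : Set (H →L[ℂ] H)) (e f : H →L[ℂ] H) : Prop :=
  ∃ v ∈ M, star v * v = e ∧ v * star v = f

/-- `e` is finite relative to `M`. -/
def FiniteProj (M : Set (H →L[ℂ] H)) (e : H →L[ℂ] H) : Prop :=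
  ∀ f ∈ M, IsProjOp f → SubProj f e → MvNEquiv M f e → f = e

/-- `e` is an abelian projection relative to `M`: the corner `eMe` is commutative. -/
def AbelianProj (M : Set (H →L[ℂ] H)) (e : H →L[ℂ] H) : Prop :=
  ∀ x ∈ M, ∀ y ∈ M, (e * x * e) * (e * y * e) = (e * y * e) * (e * x * e)

/-- A von Neumann algebra (given as a set) is of type III: no nonzero finite projections. -/
def TypeIII (M : Set (H →L[ℂ] H)) : Prop :=
  ∀ e ∈ M, IsProjOp e → FiniteProj M e → e = 0

/-- Type II₁ : finite with no nonzero abelian projections. -/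
def TypeII1 (M : Set (H →L[ℂ] H)) : Prop :=
  FiniteProj M 1 ∧ ∀ e ∈ M, IsProjOp e → AbelianProj M e → e = 0

/-- Type I_n : the identity is the sum of `n` orthogonal, mutually equivalent
abelian projections. -/
def TypeI (M : Set (H →L[ℂ] H)) (n : Cardinal) : Prop :=
  ∃ (ι : Type) (E : ι → H →L[ℂ] H), Cardinal.mk ι = n ∧
    (∀ a, E a ∈ M ∧ IsProjOp (E a) ∧ AbelianProj M (E a)) ∧
    (Pairwise fun a b => E a * E b = 0) ∧
    (∀ a b, MvNEquiv M (E a) (E b)) ∧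
    (∀ v : H, HasSum (fun a => (E a) v) v)

/-- The scalar operators. -/
def scalarOps (H : Type*) [NormedAddCommGroup H] [InnerProductSpace ℂ H] [CompleteSpace H] :
    Set (H →L[ℂ] H) := Set.range fun c : ℂ => c • (1 : H →L[ℂ] H)

/-- `M` is a factor. -/
def IsFactor (M : Set (H →L[ℂ] H)) : Prop := centerSet M = scalarOps H

/-- `R` is graded by the self-adjoint unitary `Γ`. -/
def GradedBy (R : Set (H →L[ℂ] H)) (Γ : H →L[ℂ] H) : Prop :=
  IsSAU Γ ∧ ∀ x ∈ R, Γ * x * Γ ∈ R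

/-- The von Neumann algebra generated by a (star-closed, unital) set:
its double commutant. -/
def genVN (S : Set (H →L[ℂ] H)) : Set (H →L[ℂ] H) :=
  Set.centralizer (Set.centralizer S)

/-- `c` is the central support of `T` in `M`. -/
def IsCentralSupport (M : Set (H →L[ℂ] H)) (T c : H →L[ℂ] H) : Prop :=
  c ∈ centerSet M ∧ IsProjOp c ∧ c * T = T ∧
    ∀ d ∈ centerSet M, IsProjOp d → d * T = T → c * d = c

section Tensor

variable {H₁ H₂ K : Type*}
  [NormedAddCommGroup H₁] [InnerProductSpace ℂ H₁] [CompleteSpace H₁]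
  [NormedAddCommGroup H₂] [InnerProductSpace ℂ H₂] [CompleteSpace H₂]
  [NormedAddCommGroup K] [InnerProductSpace ℂ K] [CompleteSpace K]

/-- `T` realizes the (spatial) tensor product of operators: it is bilinear,
multiplicative, star-preserving and unital, modelling `A ⊗ B` on `H₁ ⊗ H₂ = K`. -/
def IsTensorMap (T : (H₁ →L[ℂ] H₁) → (H₂ →L[ℂ] H₂) → (K →L[ℂ] K)) : Prop :=
  T 1 1 = 1 ∧
  (∀ A B C D, T A B * T C D = T (A * C) (B * D)) ∧
  (∀ A B, star (T A B) = T (star A) (star B)) ∧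
  (∀ A A' B, T (A + A') B = T A B + T A' B) ∧
  (∀ A B B', T A (B + B') = T A B + T A B') ∧
  (∀ (c : ℂ) A B, T (c • A) B = c • T A B) ∧
  (∀ (c : ℂ) A B, T A (c • B) = c • T A B)

/-- The graded tensor product `R₁ ⊗̂ R₂`: the von Neumann algebra generated by the
operators `A Γ₁^(∂B) ⊗ B` for homogeneous `B`. -/
def gradedTP (T : (H₁ →L[ℂ] H₁) → (H₂ →L[ℂ] H₂) → (K →L[ℂ] K))
    (R₁ : Set (H₁ →L[ℂ] H₁)) (Γ₁ : H₁ →L[ℂ] H₁)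
    (R₂ : Set (H₂ →L[ℂ] H₂)) (Γ₂ : H₂ →L[ℂ] H₂) : Set (K →L[ℂ] K) :=
  genVN ({x | ∃ A ∈ R₁, ∃ B ∈ evenPart R₂ Γ₂, x = T A B} ∪
         {x | ∃ A ∈ R₁, ∃ B ∈ oddPart R₂ Γ₂, x = T (A * Γ₁) B})

/-- The ordinary von Neumann tensor product `R₁ ⊗̄ R₂`: generated by simple tensors. -/
def normalTP (T : (H₁ →L[ℂ] H₁) → (H₂ →L[ℂ] H₂) → (K →L[ℂ] K))
    (R₁ : Set (H₁ →L[ℂ] H₁)) (R₂ : Set (H₂ →L[ℂ] H₂)) : Set (K →L[ℂ] K) :=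
  genVN {x | ∃ A ∈ R₁, ∃ B ∈ R₂, x = T A B}

end Tensor

set_option linter.unusedSectionVars false

namespace Stmt17Aux


variable {K : Type*} [NormedAddCommGroup K] [InnerProductSpace ℂ K] [CompleteSpace K]

variable (K) in
abbrev Kp (n : ℕ) := PiLp 2 (fun _ : Fin n => K)

instance (n : ℕ) : CompleteSpace (Kp K n) := inferInstanceAs (CompleteSpace (PiLp 2 (fun _ : Fin n => K)))

variable {n : ℕ}

def diagOp (n : ℕ) (a : K →L[ℂ] K) : Kp K n →L[ℂ] Kp K n :=
  (PiLp.continuousLinearEquiv 2 ℂ (fun _ : Fin n => K)).symm.toContinuousLinearMap ∘L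
    (ContinuousLinearMap.pi fun i => a ∘L ContinuousLinearMap.proj i) ∘L
    (PiLp.continuousLinearEquiv 2 ℂ (fun _ : Fin n => K)).toContinuousLinearMap

@[simp] lemma diagOp_apply (a : K →L[ℂ] K) (v : Kp K n) (i : Fin n) :
    diagOp n a v i = a (v i) := rfl

lemma diagOp_mul (a b : K →L[ℂ] K) :
    diagOp n (a * b) = diagOp n a ∘L diagOp n b := by
  ext v i; rfl

def singleOp (n : ℕ) (j : Fin n) : K →L[ℂ] Kp K n :=
  (PiLp.continuousLinearEquiv 2 ℂ (fun _ : Fin n => K)).symm.toContinuousLinearMap ∘L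
    ⟨LinearMap.single ℂ (fun _ : Fin n => K) j,
      continuous_single (A := fun _ : Fin n => K) j⟩

@[simp] lemma singleOp_apply (j : Fin n) (v : K) (i : Fin n) :
    singleOp n j v i = if i = j then v else 0 := by
  have h : singleOp n j v i = (Pi.single j v : ∀ _ : Fin n, K) i := rfl
  rw [h, Pi.single_apply]

lemma sum_singleOp (v : Kp K n) : ∑ j, singleOp n j (v j) = v := by
  ext i
  have h : (∑ j, singleOp n j (v j)) i = ∑ j, (singleOp n j (v j) : ∀ _ : Fin n, K) i := by
    rw [WithLp.ofLp_sum]; exact Finset.sum_apply i Finset.univ _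
  rw [h]
  simp

lemma diagOp_inner (a : K →L[ℂ] K) (v w : Kp K n) :
    inner ℂ (diagOp n a v) w = (inner ℂ v (diagOp n (star a) w) : ℂ) := by
  simp only [PiLp.inner_apply, diagOp_apply]
  refine Finset.sum_congr rfl fun i _ => ?_
  rw [ContinuousLinearMap.star_eq_adjoint, ContinuousLinearMap.adjoint_inner_right]

lemma norm_coord_le (v : Kp K n) (i : Fin n) : ‖v i‖ ≤ ‖v‖ := by
  have h := PiLp.norm_eq_sum (p := 2) (by norm_num) v
  have h2 : ‖v i‖ ^ (2:ℝ) ≤ ∑ j, ‖v j‖ ^ (2:ℝ) := by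
    refine Finset.single_le_sum (f := fun j => ‖v j‖ ^ (2:ℝ)) (fun j _ => ?_) (Finset.mem_univ i)
    positivity
  calc ‖v i‖ = (‖v i‖ ^ (2:ℝ)) ^ ((1:ℝ)/2) := by
        rw [← Real.rpow_mul (norm_nonneg _)]; norm_num
    _ ≤ (∑ j, ‖v j‖ ^ (2:ℝ)) ^ ((1:ℝ)/2) := by
        apply Real.rpow_le_rpow (by positivity) h2 (by norm_num)
    _ = ‖v‖ := by rw [h]; norm_num



lemma conj_mul {R : Type*} [Ring R] (g b c : R) (hg : g * g = 1) :
    g * (b * c) * g = (g * b * g) * (g * c * g) := by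
  have h : (g * b * g) * (g * c * g) = g * b * (g * g) * c * g := by noncomm_ring
  rw [h, hg]; noncomm_ring

lemma sau_norm {K : Type*} [NormedAddCommGroup K] [InnerProductSpace ℂ K] [CompleteSpace K]
    (Γ : K →L[ℂ] K) (h1 : star Γ = Γ) (h2 : Γ * Γ = 1) (w : K) : ‖Γ w‖ = ‖w‖ := by
  have h3 : (ContinuousLinearMap.adjoint Γ) (Γ w) = w := by
    rw [← ContinuousLinearMap.star_eq_adjoint, h1]
    have h4 : Γ (Γ w) = (Γ * Γ) w := rfl
    rw [h4, h2]; rfl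
  have h5 : (inner ℂ (Γ w) (Γ w) : ℂ) = inner ℂ w w := by
    rw [← ContinuousLinearMap.adjoint_inner_left, h3]
  have h7 : ‖Γ w‖ ^ 2 = ‖w‖ ^ 2 := by
    rw [← inner_self_eq_norm_sq (𝕜 := ℂ), ← inner_self_eq_norm_sq (𝕜 := ℂ), h5]
  nlinarith [norm_nonneg (Γ w), norm_nonneg w]


/-- The key density consequence of the (finite-vector) double commutant argument. -/
lemma density (A : Set (K →L[ℂ] K))
    (h1 : (1 : K →L[ℂ] K) ∈ A)
    (hmul : ∀ {a b : K →L[ℂ] K}, a ∈ A → b ∈ A → a * b ∈ A)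
    (hadd : ∀ {a b : K →L[ℂ] K}, a ∈ A → b ∈ A → a + b ∈ A)
    (hsmul : ∀ (c : ℂ) {a : K →L[ℂ] K}, a ∈ A → c • a ∈ A)
    (hstar : ∀ {a : K →L[ℂ] K}, a ∈ A → star a ∈ A)
    {x : K →L[ℂ] K} (hx : x ∈ Set.centralizer (Set.centralizer A))
    (n : ℕ) (ξ : Fin n → K) {ε : ℝ} (hε : 0 < ε) :
    ∃ a ∈ A, ∀ i, ‖x (ξ i) - a (ξ i)‖ < ε := by
  classical
  set ξv : Kp K n := (WithLp.equiv 2 (∀ _ : Fin n, K)).symm ξ with hξv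
  have hξvi : ∀ i, ξv i = ξ i := fun i => rfl
  -- the submodule W = { diag(a) ξv : a ∈ A }
  have hzero : (0 : K →L[ℂ] K) ∈ A := by
    simpa using hsmul 0 h1
  set W : Submodule ℂ (Kp K n) :=
    { carrier := (fun a => diagOp n a ξv) '' A
      add_mem' := by
        rintro _ _ ⟨a, ha, rfl⟩ ⟨b, hb, rfl⟩
        exact ⟨a + b, hadd ha hb, by ext i; simp⟩
      zero_mem' := ⟨0, hzero, by ext i; simp⟩
      smul_mem' := by
        rintro c _ ⟨a, ha, rfl⟩
        exact ⟨c • a, hsmul c ha, by ext i; simp⟩ } with hW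
  set M := W.topologicalClosure with hM
  haveI : CompleteSpace M := W.isClosed_topologicalClosure.completeSpace_coe
  set P : Kp K n →L[ℂ] Kp K n := M.subtypeL ∘L M.orthogonalProjectionOnto with hP
  have hPmem : ∀ u, P u ∈ M := fun u => by simp [hP]
  have hPid : ∀ u ∈ M, P u = u := by
    intro u hu
    have := Submodule.orthogonalProjectionOnto_mem_subspace_eq_self (K := M) ⟨u, hu⟩
    simpa [hP] using congrArg Subtype.val this
  have hPzero : ∀ u ∈ Mᗮ, P u = 0 := by
    intro u hu
    have := Submodule.orthogonalProjectionOnto_apply_of_mem_orthogonal (K := M) hu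
    simpa [hP] using congrArg Subtype.val this
  have hPsub : ∀ u, u - P u ∈ Mᗮ := fun u => M.sub_starProjection_mem_orthogonal u
  -- M is invariant under diagOp a for a in A
  have key1 : ∀ a ∈ A, ∀ u ∈ M, diagOp n a u ∈ M := by
    intro a ha u hu
    have hu' : u ∈ closure (W : Set (Kp K n)) := by
      rwa [← Submodule.topologicalClosure_coe]
    have : diagOp n a u ∈ closure (W : Set (Kp K n)) := by
      refine map_mem_closure (diagOp n a).continuous hu' ?_
      rintro _ ⟨b, hb, rfl⟩
      exact ⟨a * b, hmul ha hb, by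
        show diagOp n (a * b) ξv = diagOp n a (diagOp n b ξv)
        rw [diagOp_mul]; rfl⟩
    rwa [← Submodule.topologicalClosure_coe] at this
  -- P commutes with diagOp a for a ∈ A
  have key2 : ∀ a ∈ A, ∀ v, P (diagOp n a v) = diagOp n a (P v) := by
    intro a ha v
    have hv : diagOp n a v = diagOp n a (P v) + diagOp n a (v - P v) := by
      rw [← map_add]; congr 1; abel
    have h1' : P (diagOp n a (P v)) = diagOp n a (P v) :=
      hPid _ (key1 a ha _ (hPmem v))
    have h2' : diagOp n a (v - P v) ∈ Mᗮ := by
      rw [Submodule.mem_orthogonal']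
      intro m hm
      rw [diagOp_inner]
      have := (Submodule.mem_orthogonal' _ _).1 (hPsub v) _ (key1 _ (hstar ha) _ hm)
      exact this
    rw [hv, map_add, h1', hPzero _ h2', add_zero]
  -- every operator commuting with all diagOp a (a ∈ A) also commutes with diagOp x
  have key3 : ∀ Y : Kp K n →L[ℂ] Kp K n,
      (∀ a ∈ A, ∀ v, Y (diagOp n a v) = diagOp n a (Y v)) →
      ∀ v, Y (diagOp n x v) = diagOp n x (Y v) := by
    intro Y hY v
    set projOp : Fin n → (Kp K n →L[ℂ] K) := fun i =>
      (ContinuousLinearMap.proj i) ∘L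
        (PiLp.continuousLinearEquiv 2 ℂ (fun _ : Fin n => K)).toContinuousLinearMap
      with hprojOp
    have hproj : ∀ (i) (u : Kp K n), projOp i u = u i := fun i u => rfl
    have hsingle : ∀ (g : K →L[ℂ] K) (j w), diagOp n g (singleOp n j w) = singleOp n j (g w) := by
      intro g j w; ext i
      simp only [diagOp_apply, singleOp_apply]
      split <;> simp
    set Yij : Fin n → Fin n → (K →L[ℂ] K) := fun i j => projOp i ∘L Y ∘L singleOp n j with hYij
    have hYijA : ∀ i j, Yij i j ∈ Set.centralizer A := by
      intro i j g hg
      ext w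
      have : g (Y (singleOp n j w) i) = (Y (singleOp n j (g w))) i := by
        have h1'' : (diagOp n g (Y (singleOp n j w))) i = g (Y (singleOp n j w) i) := rfl
        rw [← h1'', ← hY g hg, hsingle]
      simpa [hYij, hproj] using this
    have hYx : ∀ i j, ∀ w, Yij i j (x w) = x (Yij i j w) := by
      intro i j w
      have := hx _ (hYijA i j)
      -- hx : ∀ g ∈ centralizer A, g * x = x * g;  this : Yij * x = x * Yij
      have := congrFun (congrArg (fun (f : K →L[ℂ] K) => (f : K → K)) this) w
      simpa using this
    -- componentwise computation
    ext i
    have hv : ∀ (u : Kp K n), Y u = ∑ j, Y (singleOp n j (u j)) := by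
      intro u
      conv_lhs => rw [← sum_singleOp u]
      rw [map_sum]
    have happ : ∀ (F : Fin n → Kp K n) (i : Fin n),
        (∑ j, F j) i = ∑ j, (F j : ∀ _ : Fin n, K) i := fun F i => by
      rw [WithLp.ofLp_sum]; exact Finset.sum_apply i Finset.univ _
    calc (Y (diagOp n x v)) i
        = (∑ j, Y (singleOp n j (x (v j)))) i := by
          rw [hv (diagOp n x v)]; rfl
      _ = ∑ j, (Y (singleOp n j (x (v j)))) i := happ _ i
      _ = ∑ j, x ((Y (singleOp n j (v j))) i) := by
          refine Finset.sum_congr rfl fun j _ => ?_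
          have := hYx i j (v j)
          simpa [hYij, hproj] using this
      _ = x (∑ j, (Y (singleOp n j (v j))) i) := by rw [map_sum]
      _ = x ((Y v) i) := by rw [← happ, ← hv]
      _ = (diagOp n x (Y v)) i := rfl
  -- conclude
  have hPcomm : ∀ v, P (diagOp n x v) = diagOp n x (P v) := key3 P (fun a ha v => key2 a ha v)
  have hξvM : ξv ∈ M := by
    have : ξv ∈ W := ⟨1, h1, by ext i; simp⟩
    exact W.le_topologicalClosure this
  have hxM : diagOp n x ξv ∈ M := by
    have : diagOp n x ξv = P (diagOp n x ξv) := by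
      rw [hPcomm, hPid _ hξvM]
    rw [this]; exact hPmem _
  have hclo : diagOp n x ξv ∈ closure (W : Set (Kp K n)) := by
    rwa [← Submodule.topologicalClosure_coe]
  rcases Metric.mem_closure_iff.1 hclo ε hε with ⟨w, ⟨a, ha, rfl⟩, hdist⟩
  refine ⟨a, ha, fun i => ?_⟩
  have : ‖x (ξ i) - a (ξ i)‖ = ‖(diagOp n x ξv - diagOp n a ξv) i‖ := by
    simp [hξvi]
  rw [this]
  calc ‖(diagOp n x ξv - diagOp n a ξv) i‖ ≤ ‖diagOp n x ξv - diagOp n a ξv‖ :=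
        norm_coord_le _ i
    _ < ε := by rwa [dist_eq_norm] at hdist


end Stmt17Aux

open Stmt17Aux in
/-- the even part of `R₁ ⊗̂ R₂` for the grading `Ad_{1⊗Γ₂}` is
`R₁ ⊗̄ (R₂)⁰`; and if `(R₂, Ad_{Γ₂})` is balanced then so is `(R₁ ⊗̂ R₂, Ad_{1⊗Γ₂})`. -/
theorem stmt_17 {H₁ H₂ K : Type*}
    [NormedAddCommGroup H₁] [InnerProductSpace ℂ H₁] [CompleteSpace H₁]
    [NormedAddCommGroup H₂] [InnerProductSpace ℂ H₂] [CompleteSpace H₂]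
    [NormedAddCommGroup K] [InnerProductSpace ℂ K] [CompleteSpace K]
    (T : (H₁ →L[ℂ] H₁) → (H₂ →L[ℂ] H₂) → (K →L[ℂ] K)) (hT : IsTensorMap T)
    (R₁ : VonNeumannAlgebra H₁) (Γ₁ : H₁ →L[ℂ] H₁)
    (h₁ : GradedBy (R₁ : Set (H₁ →L[ℂ] H₁)) Γ₁)
    (R₂ : VonNeumannAlgebra H₂) (Γ₂ : H₂ →L[ℂ] H₂)
    (h₂ : GradedBy (R₂ : Set (H₂ →L[ℂ] H₂)) Γ₂) :
    evenPart (gradedTP T (R₁ : Set (H₁ →L[ℂ] H₁)) Γ₁ (R₂ : Set (H₂ →L[ℂ] H₂)) Γ₂)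
        (T 1 Γ₂) =
      genVN {x | ∃ A ∈ (R₁ : Set (H₁ →L[ℂ] H₁)),
        ∃ B ∈ evenPart (R₂ : Set (H₂ →L[ℂ] H₂)) Γ₂, x = T A B} ∧
    ((∃ U ∈ oddPart (R₂ : Set (H₂ →L[ℂ] H₂)) Γ₂, star U = U ∧ U * U = 1) →
      ∃ W ∈ oddPart
        (gradedTP T (R₁ : Set (H₁ →L[ℂ] H₁)) Γ₁ (R₂ : Set (H₂ →L[ℂ] H₂)) Γ₂)
        (T 1 Γ₂), star W = W ∧ W * W = 1) := by
  obtain ⟨hT1, hTmul, hTstar, hTaddl, hTaddr, hTsl, hTsr⟩ := hT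
  obtain ⟨⟨hΓ₁star, hΓ₁sq⟩, hR₁grad⟩ := h₁
  obtain ⟨⟨hΓ₂star, hΓ₂sq⟩, hR₂grad⟩ := h₂
  have hTneg : ∀ (A : H₁ →L[ℂ] H₁) (B : H₂ →L[ℂ] H₂), T A (-B) = -(T A B) := by
    intro A B
    rw [← neg_one_smul ℂ B, hTsr, neg_one_smul]
  set Se : Set (K →L[ℂ] K) :=
    {x | ∃ A ∈ (R₁ : Set (H₁ →L[ℂ] H₁)),
        ∃ B ∈ evenPart (R₂ : Set (H₂ →L[ℂ] H₂)) Γ₂, x = T A B} with hSe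
  set So : Set (K →L[ℂ] K) :=
    {x | ∃ A ∈ (R₁ : Set (H₁ →L[ℂ] H₁)),
        ∃ B ∈ oddPart (R₂ : Set (H₂ →L[ℂ] H₂)) Γ₂, x = T (A * Γ₁) B} with hSo
  set Γ : K →L[ℂ] K := T 1 Γ₂ with hΓ
  have hΓsq : Γ * Γ = 1 := by rw [hΓ, hTmul, one_mul, hΓ₂sq, hT1]
  have hΓstar : star Γ = Γ := by rw [hΓ, hTstar, star_one, hΓ₂star]
  -- commutation of Γ₂ with even/odd elements
  have heB : ∀ {B : H₂ →L[ℂ] H₂}, Γ₂ * B * Γ₂ = B → Γ₂ * B = B * Γ₂ := by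
    intro B hB
    have h := congrArg (· * Γ₂) hB
    simp only [mul_assoc, hΓ₂sq, mul_one] at h
    exact h
  have hoB : ∀ {B : H₂ →L[ℂ] H₂}, Γ₂ * B * Γ₂ = -B → Γ₂ * B = -(B * Γ₂) := by
    intro B hB
    have h := congrArg (· * Γ₂) hB
    simp only [mul_assoc, hΓ₂sq, mul_one, neg_mul] at h
    exact h
  -- Γ commutes with Se, anticommutes with So
  have hΓSe : ∀ s ∈ Se, Γ * s = s * Γ := by
    rintro _ ⟨A, hA, B, hB, rfl⟩
    rw [hΓ, hTmul, hTmul, one_mul, mul_one, heB hB.2]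
  have hΓSo : ∀ s ∈ So, Γ * s = -(s * Γ) := by
    rintro _ ⟨A, hA, B, hB, rfl⟩
    rw [hΓ, hTmul, hTmul, one_mul, mul_one, hoB hB.2, hTneg]
  -- multiplicative structure of the generators
  have mul_ee : ∀ s ∈ Se, ∀ t ∈ Se, s * t ∈ Se := by
    rintro _ ⟨A, hA, B, hB, rfl⟩ _ ⟨A', hA', B', hB', rfl⟩
    refine ⟨A * A', ?_, B * B', ⟨?_, ?_⟩, hTmul _ _ _ _⟩
    · exact mul_mem (SetLike.mem_coe.mp hA) (SetLike.mem_coe.mp hA')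
    · exact mul_mem (SetLike.mem_coe.mp hB.1) (SetLike.mem_coe.mp hB'.1)
    · rw [conj_mul Γ₂ B B' hΓ₂sq, hB.2, hB'.2]
  have mul_eo : ∀ s ∈ Se, ∀ t ∈ So, s * t ∈ So := by
    rintro _ ⟨A, hA, B, hB, rfl⟩ _ ⟨A', hA', B', hB', rfl⟩
    refine ⟨A * A', mul_mem (SetLike.mem_coe.mp hA) (SetLike.mem_coe.mp hA'),
      B * B', ⟨mul_mem (SetLike.mem_coe.mp hB.1) (SetLike.mem_coe.mp hB'.1), ?_⟩, ?_⟩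
    · rw [conj_mul Γ₂ B B' hΓ₂sq, hB.2, hB'.2, mul_neg]
    · rw [hTmul, mul_assoc]
  have mul_oe' : ∀ s ∈ So, ∀ t ∈ Se, s * t ∈ So := by
    rintro _ ⟨A, hA, B, hB, rfl⟩ _ ⟨A', hA', B', hB', rfl⟩
    refine ⟨A * (Γ₁ * A' * Γ₁),
      mul_mem (SetLike.mem_coe.mp hA) (SetLike.mem_coe.mp (hR₁grad A' hA')),
      B * B', ⟨mul_mem (SetLike.mem_coe.mp hB.1) (SetLike.mem_coe.mp hB'.1), ?_⟩, ?_⟩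
    · rw [conj_mul Γ₂ B B' hΓ₂sq, hB.2, hB'.2, neg_mul]
    · rw [hTmul]
      congr 1
      calc A * Γ₁ * A' = A * (Γ₁ * A' * (Γ₁ * Γ₁)) := by rw [hΓ₁sq]; noncomm_ring
        _ = A * (Γ₁ * A' * Γ₁) * Γ₁ := by noncomm_ring
  have mul_oo : ∀ s ∈ So, ∀ t ∈ So, s * t ∈ Se := by
    rintro _ ⟨A, hA, B, hB, rfl⟩ _ ⟨A', hA', B', hB', rfl⟩
    refine ⟨A * (Γ₁ * A' * Γ₁),
      mul_mem (SetLike.mem_coe.mp hA) (SetLike.mem_coe.mp (hR₁grad A' hA')),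
      B * B', ⟨mul_mem (SetLike.mem_coe.mp hB.1) (SetLike.mem_coe.mp hB'.1), ?_⟩, ?_⟩
    · rw [conj_mul Γ₂ B B' hΓ₂sq, hB.2, hB'.2, neg_mul, mul_neg, neg_neg]
    · rw [hTmul]
      congr 1
  have star_e : ∀ s ∈ Se, star s ∈ Se := by
    rintro _ ⟨A, hA, B, hB, rfl⟩
    refine ⟨star A, star_mem (SetLike.mem_coe.mp hA),
      star B, ⟨star_mem (SetLike.mem_coe.mp hB.1), ?_⟩, (hTstar _ _)⟩
    calc Γ₂ * star B * Γ₂ = star (Γ₂ * B * Γ₂) := by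
          simp only [star_mul, hΓ₂star, mul_assoc]
      _ = star B := by rw [hB.2]
  have star_o : ∀ s ∈ So, star s ∈ So := by
    rintro _ ⟨A, hA, B, hB, rfl⟩
    have hBs : Γ₂ * star B * Γ₂ = -(star B) := by
      calc Γ₂ * star B * Γ₂ = star (Γ₂ * B * Γ₂) := by
            simp only [star_mul, hΓ₂star, mul_assoc]
        _ = -(star B) := by rw [hB.2, star_neg]
    refine ⟨Γ₁ * star A * Γ₁,
      SetLike.mem_coe.mp (hR₁grad (star A) (star_mem (SetLike.mem_coe.mp hA))),
      star B, ⟨star_mem (SetLike.mem_coe.mp hB.1), hBs⟩, ?_⟩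
    rw [hTstar]
    congr 1
    calc star (A * Γ₁) = Γ₁ * star A := by rw [star_mul, hΓ₁star]
      _ = Γ₁ * star A * (Γ₁ * Γ₁) := by rw [hΓ₁sq, mul_one]
      _ = Γ₁ * star A * Γ₁ * Γ₁ := by noncomm_ring
  have one_e : (1 : K →L[ℂ] K) ∈ Se := by
    refine ⟨1, one_mem _, 1, ⟨one_mem _, by rw [mul_one, hΓ₂sq]⟩, hT1.symm⟩
  -- spans
  set p₀ := Submodule.span ℂ Se with hp₀
  set p₁ := Submodule.span ℂ So with hp₁
  have hmul_sub : ∀ (U V : Set (K →L[ℂ] K)) (W : Submodule ℂ (K →L[ℂ] K)),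
      (∀ s ∈ U, ∀ t ∈ V, s * t ∈ (W : Set (K →L[ℂ] K))) →
      ∀ a ∈ Submodule.span ℂ U, ∀ b ∈ Submodule.span ℂ V, a * b ∈ W := by
    intro U V W hUV a ha b hb
    have h : Submodule.span ℂ U * Submodule.span ℂ V ≤ W := by
      rw [Submodule.span_mul_span]
      refine Submodule.span_le.2 ?_
      rw [Set.mul_subset_iff]
      exact hUV
    exact h (Submodule.mul_mem_mul ha hb)
  have hmul00 : ∀ a ∈ p₀, ∀ b ∈ p₀, a * b ∈ p₀ :=
    hmul_sub Se Se p₀ (fun s hs t ht => Submodule.subset_span (mul_ee s hs t ht))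
  have hmul01 : ∀ a ∈ p₀, ∀ b ∈ p₁, a * b ∈ p₁ :=
    hmul_sub Se So p₁ (fun s hs t ht => Submodule.subset_span (mul_eo s hs t ht))
  have hmul10 : ∀ a ∈ p₁, ∀ b ∈ p₀, a * b ∈ p₁ :=
    hmul_sub So Se p₁ (fun s hs t ht => Submodule.subset_span (mul_oe' s hs t ht))
  have hmul11 : ∀ a ∈ p₁, ∀ b ∈ p₁, a * b ∈ p₀ :=
    hmul_sub So So p₀ (fun s hs t ht => Submodule.subset_span (mul_oo s hs t ht))
  have hstar_span : ∀ (U : Set (K →L[ℂ] K)), (∀ s ∈ U, star s ∈ U) →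
      ∀ a ∈ Submodule.span ℂ U, star a ∈ Submodule.span ℂ U := by
    intro U hU a ha
    refine Submodule.span_induction (p := fun z _ => star z ∈ Submodule.span ℂ U)
      (fun s hs => Submodule.subset_span (hU s hs))
      (by simp) (fun u v hu hv h1 h2 => by
        show star (u + v) ∈ Submodule.span ℂ U
        rw [star_add]; exact add_mem h1 h2)
      (fun c u hu h1 => by
        show star (c • u) ∈ Submodule.span ℂ U
        rw [star_smul]; exact Submodule.smul_mem _ _ h1) ha
  have hstar0 : ∀ a ∈ p₀, star a ∈ p₀ := hstar_span Se star_e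
  have hstar1 : ∀ a ∈ p₁, star a ∈ p₁ := hstar_span So star_o
  have hΓ0 : ∀ a ∈ p₀, Γ * a = a * Γ := by
    intro a ha
    refine Submodule.span_induction (p := fun z _ => Γ * z = z * Γ)
      (fun s hs => hΓSe s hs) (by simp)
      (fun u v hu hv h1 h2 => by
        show Γ * (u + v) = (u + v) * Γ
        rw [mul_add, add_mul, h1, h2])
      (fun c u hu h1 => by
        show Γ * (c • u) = (c • u) * Γ
        rw [mul_smul_comm, smul_mul_assoc, h1]) ha
  have hΓ1 : ∀ a ∈ p₁, Γ * a = -(a * Γ) := by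
    intro a ha
    refine Submodule.span_induction (p := fun z _ => Γ * z = -(z * Γ))
      (fun s hs => hΓSo s hs) (by simp)
      (fun u v hu hv h1 h2 => by
        show Γ * (u + v) = -((u + v) * Γ)
        rw [mul_add, add_mul, h1, h2, neg_add])
      (fun c u hu h1 => by
        show Γ * (c • u) = -((c • u) * Γ)
        rw [mul_smul_comm, smul_mul_assoc, h1, smul_neg]) ha
  set Asub := p₀ ⊔ p₁ with hAsub
  set Aset := (Asub : Set (K →L[ℂ] K)) with hAset
  have hA1 : (1 : K →L[ℂ] K) ∈ Aset :=
    SetLike.mem_coe.mpr (Submodule.mem_sup_left (Submodule.subset_span one_e))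
  have hAmul : ∀ {a b : K →L[ℂ] K}, a ∈ Aset → b ∈ Aset → a * b ∈ Aset := by
    intro a b ha hb
    obtain ⟨a₀, ha₀, a₁, ha₁, rfl⟩ := Submodule.mem_sup.1 (SetLike.mem_coe.mp ha)
    obtain ⟨b₀, hb₀, b₁, hb₁, rfl⟩ := Submodule.mem_sup.1 (SetLike.mem_coe.mp hb)
    have hexp : (a₀ + a₁) * (b₀ + b₁) = (a₀ * b₀ + a₁ * b₁) + (a₀ * b₁ + a₁ * b₀) := by
      noncomm_ring
    rw [hexp]
    exact SetLike.mem_coe.mpr (add_mem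
      (Submodule.mem_sup_left (add_mem (hmul00 _ ha₀ _ hb₀) (hmul11 _ ha₁ _ hb₁)))
      (Submodule.mem_sup_right (add_mem (hmul01 _ ha₀ _ hb₁) (hmul10 _ ha₁ _ hb₀))))
  have hAadd : ∀ {a b : K →L[ℂ] K}, a ∈ Aset → b ∈ Aset → a + b ∈ Aset :=
    fun ha hb => SetLike.mem_coe.mpr (add_mem (SetLike.mem_coe.mp ha) (SetLike.mem_coe.mp hb))
  have hAsmul : ∀ (c : ℂ) {a : K →L[ℂ] K}, a ∈ Aset → c • a ∈ Aset :=
    fun c {a} ha => SetLike.mem_coe.mpr (Submodule.smul_mem _ c (SetLike.mem_coe.mp ha))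
  have hAstar : ∀ {a : K →L[ℂ] K}, a ∈ Aset → star a ∈ Aset := by
    intro a ha
    obtain ⟨a₀, ha₀, a₁, ha₁, rfl⟩ := Submodule.mem_sup.1 (SetLike.mem_coe.mp ha)
    rw [star_add]
    exact SetLike.mem_coe.mpr (add_mem (Submodule.mem_sup_left (hstar0 _ ha₀))
      (Submodule.mem_sup_right (hstar1 _ ha₁)))
  have hSsubA : Se ∪ So ⊆ Aset := by
    rintro s (hs | hs)
    · exact SetLike.mem_coe.mpr (Submodule.mem_sup_left (Submodule.subset_span hs))
    · exact SetLike.mem_coe.mpr (Submodule.mem_sup_right (Submodule.subset_span hs))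
  constructor
  · -- Part 1
    apply Set.eq_of_subset_of_subset
    · -- even part of graded TP ⊆ R₁ ⊗ R₂⁰
      rintro x ⟨hx, hxΓ⟩
      have hxA : x ∈ Set.centralizer (Set.centralizer Aset) := by
        have h1' : Set.centralizer Aset ⊆ Set.centralizer (Se ∪ So) :=
          Set.centralizer_subset hSsubA
        exact fun g hg => hx g (h1' hg)
      have hGxG : Γ * x * Γ = x := hxΓ
      intro y hy
      -- hy : y ∈ centralizer Se ; goal : y * x = x * y
      have hy0 : ∀ a ∈ p₀, y * a = a * y := by
        intro a ha
        refine Submodule.span_induction (p := fun z _ => y * z = z * y)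
          (fun s hs => (hy s hs).symm) (by simp)
          (fun u v hu hv h1 h2 => by
            show y * (u + v) = (u + v) * y
            rw [mul_add, add_mul, h1, h2])
          (fun c u hu h1 => by
            show y * (c • u) = (c • u) * y
            rw [mul_smul_comm, smul_mul_assoc, h1]) ha
      have main : ∀ ξ : K, x (y ξ) = y (x ξ) := by
        intro ξ
        have hnorm : ∀ ε : ℝ, 0 < ε → ‖x (y ξ) - y (x ξ)‖ < ε := by
          intro ε hε
          set δ : ℝ := ε / (2 * (‖y‖ + 1)) with hδ
          have hδpos : 0 < δ := by positivity
          obtain ⟨a, haA, hest⟩ := density Aset hA1 hAmul hAadd hAsmul hAstar hxA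
            4 ![ξ, Γ ξ, y ξ, Γ (y ξ)] hδpos
          obtain ⟨a₀, ha₀, a₁, ha₁, hsum⟩ := Submodule.mem_sup.1 (SetLike.mem_coe.mp haA)
          have hGaG : Γ * a * Γ = a₀ - a₁ := by
            rw [← hsum, mul_add, add_mul]
            have e0 : Γ * a₀ * Γ = a₀ := by
              rw [hΓ0 a₀ ha₀, mul_assoc, hΓsq, mul_one]
            have e1 : Γ * a₁ * Γ = -a₁ := by
              rw [hΓ1 a₁ ha₁, neg_mul, mul_assoc, hΓsq, mul_one]
            rw [e0, e1]
            abel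
          have hop : x - a₀ = (2⁻¹ : ℂ) • ((x - a) + Γ * (x - a) * Γ) := by
            have hexp : Γ * (x - a) * Γ = x - (a₀ - a₁) := by
              rw [mul_sub, sub_mul, hGxG, hGaG]
            rw [hexp, ← hsum]
            match_scalars <;> ring
          have hb : ∀ v : K, ‖x v - a v‖ < δ → ‖x (Γ v) - a (Γ v)‖ < δ →
              ‖x v - a₀ v‖ < δ := by
            intro v h1v h2v
            have happ : x v - a₀ v = (2⁻¹ : ℂ) • ((x v - a v) + Γ (x (Γ v) - a (Γ v))) := by
              have := congrArg (fun (f : K →L[ℂ] K) => f v) hop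
              simpa using this
            rw [happ]
            calc ‖(2⁻¹ : ℂ) • ((x v - a v) + Γ (x (Γ v) - a (Γ v)))‖
                = 2⁻¹ * ‖(x v - a v) + Γ (x (Γ v) - a (Γ v))‖ := by
                  rw [norm_smul]; norm_num
              _ ≤ 2⁻¹ * (‖x v - a v‖ + ‖Γ (x (Γ v) - a (Γ v))‖) := by
                  gcongr
                  exact norm_add_le _ _
              _ = 2⁻¹ * (‖x v - a v‖ + ‖x (Γ v) - a (Γ v)‖) := by
                  rw [sau_norm Γ hΓstar hΓsq]
              _ < δ := by linarith
          have est0 : ‖x ξ - a ξ‖ < δ := by simpa using hest 0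
          have est1 : ‖x (Γ ξ) - a (Γ ξ)‖ < δ := by simpa using hest 1
          have est2 : ‖x (y ξ) - a (y ξ)‖ < δ := by simpa using hest 2
          have est3 : ‖x (Γ (y ξ)) - a (Γ (y ξ))‖ < δ := by simpa using hest 3
          have hb1 : ‖x ξ - a₀ ξ‖ < δ := hb ξ est0 est1
          have hb2 : ‖x (y ξ) - a₀ (y ξ)‖ < δ := hb (y ξ) est2 est3
          have hya : a₀ (y ξ) = y (a₀ ξ) := by
            have := congrArg (fun (f : K →L[ℂ] K) => f ξ) (hy0 a₀ ha₀)
            simpa using this.symm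
          have hfin : ‖x (y ξ) - y (x ξ)‖ ≤
              ‖x (y ξ) - a₀ (y ξ)‖ + ‖a₀ (y ξ) - y (x ξ)‖ :=
            norm_sub_le_norm_sub_add_norm_sub _ _ _
          have hsecond : ‖a₀ (y ξ) - y (x ξ)‖ ≤ ‖y‖ * δ := by
            rw [hya, ← map_sub]
            calc ‖y (a₀ ξ - x ξ)‖ ≤ ‖y‖ * ‖a₀ ξ - x ξ‖ := y.le_opNorm _
              _ = ‖y‖ * ‖x ξ - a₀ ξ‖ := by rw [norm_sub_rev]
              _ ≤ ‖y‖ * δ := by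
                  exact mul_le_mul_of_nonneg_left (le_of_lt hb1) (norm_nonneg y)
          have hδε : δ * (2 * (‖y‖ + 1)) = ε := by
            rw [hδ]; field_simp
          have hyn : (0:ℝ) ≤ ‖y‖ := norm_nonneg y
          nlinarith [hb2, hsecond, hfin]
        have h0 : ‖x (y ξ) - y (x ξ)‖ ≤ 0 := by
          by_contra hc
          push_neg at hc
          exact absurd (hnorm _ hc) (lt_irrefl _)
        have := norm_le_zero_iff.1 h0
        exact sub_eq_zero.1 this
      ext ξ
      exact (main ξ).symm
    · -- R₁ ⊗ R₂⁰ ⊆ even part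
      intro x hx
      refine ⟨?_, ?_⟩
      · intro g hg
        exact hx g (Set.centralizer_subset Set.subset_union_left hg)
      · have hΓc : Γ ∈ Set.centralizer Se := fun s hs => (hΓSe s hs).symm
        have h := hx Γ hΓc
        -- h : Γ * x = x * Γ
        rw [show Γ * x * Γ = x * Γ * Γ from by rw [h], mul_assoc, hΓsq, mul_one]
  · -- Part 2 : balancedness
    rintro ⟨U, hU, hUstar, hUsq⟩
    refine ⟨T Γ₁ U, ⟨?_, ?_⟩, ?_, ?_⟩
    · -- membership in graded tensor product
      apply Set.subset_centralizer_centralizer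
      right
      exact ⟨1, one_mem _, U, hU, by rw [one_mul]⟩
    · -- odd
      rw [hTmul, hTmul, hU.2, hTneg, one_mul, mul_one]
    · rw [hTstar, hΓ₁star, hUstar]
    · rw [hTmul, hΓ₁sq, hUsq, hT1]
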